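/- arXiv:1911.02865 — 3 statements merged into one kernel-verified Lean document; each statement's English description precedes it below -/
import Mathlib

section
/- Let d ≥ 1 be an integer, let 𝒱 be a binary coalescence tree over a finite set A with |A| ≥ 2, and let α : A → ℝ satisfy 0 < α(a) ≤ (d+2)/2 for every a ∈ A. Then the function c is a consistent cumulant homogeneity, namely: (1) for every subset B ⊆ A one has Σ_{v ∈ 𝒱̊ : v ∩ B ≠ ∅} c(v) ≥ Σ_{a ∈ B} α(a); (2) for every u ∈ 𝒱̊ one has Σ_{v ∈ 𝒱̊ : v ⊆ u} c(v) ≤ Σ_{a ∈ u} α(a); (3) if |A| ≥ 3, then for every u ∈ 𝒱̊ with |u| ≤ 3 one has Σ_{v ∈ 𝒱̊ : v ⊆ u} c(v) < (d+2)(|u| − 1). -/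
open Finset

/-- `𝔡(u,a)`: the number of interior nodes `v` of the coalescence tree `𝒱` with
`a ∈ v ⊆ u` (with the special convention, subtracting 1, at the root `A`). -/
def treeDepth {ι : Type*} [DecidableEq ι] (𝒱 : Finset (Finset ι)) (A u : Finset ι)
    (a : ι) : ℕ :=
  if u = A then (𝒱.filter fun v => 2 ≤ v.card ∧ a ∈ v).card - 1
  else (𝒱.filter fun v => 2 ≤ v.card ∧ a ∈ v ∧ v ⊆ u).card

/-- The cumulant homogeneity `c(u) = ∑_{a ∈ u} α(a) 2^{-𝔡(u,a)}`. -/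
noncomputable def cumHom {ι : Type*} [DecidableEq ι] (𝒱 : Finset (Finset ι))
    (A : Finset ι) (α : ι → ℝ) (u : Finset ι) : ℝ :=
  ∑ a ∈ u, α a * ((2 : ℝ) ^ treeDepth 𝒱 A u a)⁻¹

lemma geomIcc (m : ℕ) :
    ∑ k ∈ Icc 1 m, ((2:ℝ) ^ k)⁻¹ = 1 - ((2:ℝ) ^ m)⁻¹ := by
  induction m with
  | zero => simp
  | succ n ih =>
    rw [Finset.sum_Icc_succ_top (by omega), ih, pow_succ]
    have h : (2:ℝ) ^ n ≠ 0 := by positivity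
    field_simp
    ring

def Cset {ι : Type*} [DecidableEq ι] (𝒱 : Finset (Finset ι)) (a : ι)
    (u : Finset ι) : Finset (Finset ι) :=
  𝒱.filter fun v => 2 ≤ v.card ∧ a ∈ v ∧ v ⊆ u

lemma mem_Cset {ι : Type*} [DecidableEq ι] {𝒱 : Finset (Finset ι)} {a : ι}
    {u v : Finset ι} :
    v ∈ Cset 𝒱 a u ↔ v ∈ 𝒱 ∧ 2 ≤ v.card ∧ a ∈ v ∧ v ⊆ u := by
  simp [Cset, mem_filter]

lemma Cset_mono {ι : Type*} [DecidableEq ι] (𝒱 : Finset (Finset ι)) (a : ι)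
    {u w : Finset ι} (h : u ⊆ w) : Cset 𝒱 a u ⊆ Cset 𝒱 a w := by
  intro v hv
  rw [mem_Cset] at hv ⊢
  exact ⟨hv.1, hv.2.1, hv.2.2.1, hv.2.2.2.trans h⟩

lemma key_sum {ι : Type*} [DecidableEq ι] {𝒱 : Finset (Finset ι)} {A : Finset ι}
    (hmem : ∀ u ∈ 𝒱, u.Nonempty ∧ u ⊆ A)
    (hlam : ∀ u ∈ 𝒱, ∀ v ∈ 𝒱, Disjoint u v ∨ u ⊆ v ∨ v ⊆ u)
    (a : ι) {u : Finset ι} (hu : u ∈ 𝒱) (hcard : 2 ≤ u.card) (ha : a ∈ u) :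
    ∑ v ∈ Cset 𝒱 a u, ((2:ℝ) ^ treeDepth 𝒱 A v a)⁻¹ =
      if u = A then 1 else 1 - ((2:ℝ) ^ treeDepth 𝒱 A u a)⁻¹ := by
  classical
  set f : Finset ι → ℕ := fun v => (Cset 𝒱 a v).card with hf
  have hself : ∀ {w v : Finset ι}, v ∈ Cset 𝒱 a w → v ∈ Cset 𝒱 a v := by
    intro w v hv
    rw [mem_Cset] at hv ⊢
    exact ⟨hv.1, hv.2.1, hv.2.2.1, subset_rfl⟩
  have hfpos : ∀ {w v : Finset ι}, v ∈ Cset 𝒱 a w → 1 ≤ f v := by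
    intro w v hv
    exact card_pos.2 ⟨v, hself hv⟩
  have hstrict : ∀ {w v₁ v₂ : Finset ι}, v₁ ∈ Cset 𝒱 a w → v₂ ∈ Cset 𝒱 a w →
      v₁ ⊂ v₂ → f v₁ < f v₂ := by
    intro w v₁ v₂ h1 h2 hss
    apply card_lt_card
    constructor
    · exact Cset_mono 𝒱 a hss.subset
    · intro hcon
      have h3 : v₂ ∈ Cset 𝒱 a v₁ := hcon (hself h2)
      have h4 : v₂ ⊆ v₁ := (mem_Cset.1 h3).2.2.2
      exact absurd (hss.subset.antisymm h4) hss.ne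
  have hchain : ∀ {w v₁ v₂ : Finset ι}, v₁ ∈ Cset 𝒱 a w → v₂ ∈ Cset 𝒱 a w →
      v₁ ⊆ v₂ ∨ v₂ ⊆ v₁ := by
    intro w v₁ v₂ h1 h2
    rw [mem_Cset] at h1 h2
    rcases hlam v₁ h1.1 v₂ h2.1 with h | h | h
    · exact (Finset.disjoint_left.1 h h1.2.2.1 h2.2.2.1).elim
    · exact Or.inl h
    · exact Or.inr h
  have hinj : ∀ {w : Finset ι}, ∀ x ∈ Cset 𝒱 a w, ∀ y ∈ Cset 𝒱 a w,
      f x = f y → x = y := by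
    intro w v₁ h1 v₂ h2 heq
    by_contra hne
    rcases hchain h1 h2 with h | h
    · exact absurd heq (Nat.ne_of_lt (hstrict h1 h2 (h.ssubset_of_ne hne)))
    · exact absurd heq.symm (Nat.ne_of_lt (hstrict h2 h1 (h.ssubset_of_ne (Ne.symm hne))))
  have huC : u ∈ Cset 𝒱 a u := mem_Cset.2 ⟨hu, hcard, ha, subset_rfl⟩
  by_cases hA : u = A
  · -- root case (after subst, the root is called u)
    subst hA
    rw [if_pos rfl]
    have hmpos : 1 ≤ f u := hfpos huC
    have hdepth_root : treeDepth 𝒱 u u a = f u - 1 := by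
      unfold treeDepth
      rw [if_pos rfl]
      simp only [hf, Cset]
      have heq : (𝒱.filter fun v => 2 ≤ v.card ∧ a ∈ v)
          = 𝒱.filter fun v => 2 ≤ v.card ∧ a ∈ v ∧ v ⊆ u := by
        apply Finset.filter_congr
        intro v hv
        constructor
        · rintro ⟨h1, h2⟩; exact ⟨h1, h2, (hmem v hv).2⟩
        · rintro ⟨h1, h2, _⟩; exact ⟨h1, h2⟩
      rw [heq]
    have hdepth : ∀ v ∈ (Cset 𝒱 a u).erase u, treeDepth 𝒱 u v a = f v := by
      intro v hv
      rw [mem_erase] at hv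
      unfold treeDepth
      rw [if_neg hv.1]
      rfl
    have hAnot : ∀ v ∈ (Cset 𝒱 a u).erase u, u ∉ Cset 𝒱 a v := by
      intro v hv hcon
      rw [mem_erase] at hv
      have hvA : v ⊆ u := (mem_Cset.1 hv.2).2.2.2
      have h5 : u ⊆ v := (mem_Cset.1 hcon).2.2.2
      exact hv.1 (h5.antisymm hvA).symm
    have hcard_erase : ((Cset 𝒱 a u).erase u).card = f u - 1 := by
      rw [card_erase_of_mem huC]
    have hinj' : ∀ x ∈ (Cset 𝒱 a u).erase u, ∀ y ∈ (Cset 𝒱 a u).erase u,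
        f x = f y → x = y :=
      fun x hx y hy h => hinj x (mem_of_mem_erase hx) y (mem_of_mem_erase hy) h
    have himage : ((Cset 𝒱 a u).erase u).image f = Icc 1 (f u - 1) := by
      apply Finset.eq_of_subset_of_card_le
      · intro k hk
        rw [mem_image] at hk
        obtain ⟨v, hv, rfl⟩ := hk
        rw [mem_Icc]
        refine ⟨hfpos (mem_of_mem_erase hv), ?_⟩
        have hsub : Cset 𝒱 a v ⊆ (Cset 𝒱 a u).erase u := by
          intro x hx
          rw [mem_erase]
          refine ⟨?_, Cset_mono 𝒱 a (mem_Cset.1 (mem_of_mem_erase hv)).2.2.2 hx⟩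
          rintro rfl
          exact hAnot v hv hx
        calc f v ≤ ((Cset 𝒱 a u).erase u).card := card_le_card hsub
          _ = f u - 1 := hcard_erase
      · rw [Nat.card_Icc, Finset.card_image_of_injOn (fun x hx y hy h => hinj' x hx y hy h),
          hcard_erase]
        omega
    have hsum_erase : ∑ v ∈ (Cset 𝒱 a u).erase u, ((2:ℝ) ^ treeDepth 𝒱 u v a)⁻¹
        = 1 - ((2:ℝ) ^ (f u - 1))⁻¹ := by
      rw [Finset.sum_congr rfl (fun v hv => by rw [hdepth v hv])]
      have := Finset.sum_image (g := f) (f := fun k => ((2:ℝ) ^ k)⁻¹) hinj'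
      rw [himage, geomIcc] at this
      rw [← this]
    rw [← Finset.sum_erase_add _ _ huC, hsum_erase, hdepth_root]
    ring
  · -- non-root case
    rw [if_neg hA]
    have hnA : ∀ v ∈ Cset 𝒱 a u, v ≠ A := by
      intro v hv hcon
      subst hcon
      have h1 : v ⊆ u := (mem_Cset.1 hv).2.2.2
      have h2 : u ⊆ v := (hmem u hu).2
      exact hA (h2.antisymm h1)
    have hdepth : ∀ v ∈ Cset 𝒱 a u, treeDepth 𝒱 A v a = f v := by
      intro v hv
      unfold treeDepth
      rw [if_neg (hnA v hv)]
      rfl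
    have hinj' : ∀ x ∈ Cset 𝒱 a u, ∀ y ∈ Cset 𝒱 a u, f x = f y → x = y := hinj
    have himage : (Cset 𝒱 a u).image f = Icc 1 (f u) := by
      apply Finset.eq_of_subset_of_card_le
      · intro k hk
        rw [mem_image] at hk
        obtain ⟨v, hv, rfl⟩ := hk
        rw [mem_Icc]
        exact ⟨hfpos hv, card_le_card (Cset_mono 𝒱 a (mem_Cset.1 hv).2.2.2)⟩
      · rw [Nat.card_Icc, Finset.card_image_of_injOn (fun x hx y hy h => hinj' x hx y hy h)]
        simp only [hf]
        omega
    have hdu : treeDepth 𝒱 A u a = f u := by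
      unfold treeDepth
      rw [if_neg hA]
      rfl
    rw [Finset.sum_congr rfl (fun v hv => by rw [hdepth v hv])]
    have := Finset.sum_image (g := f) (f := fun k => ((2:ℝ) ^ k)⁻¹) hinj'
    rw [himage, geomIcc] at this
    rw [← this, hdu]

lemma sum_cumHom {ι : Type*} [DecidableEq ι] {𝒱 : Finset (Finset ι)} {A : Finset ι}
    (hmem : ∀ u ∈ 𝒱, u.Nonempty ∧ u ⊆ A)
    (hlam : ∀ u ∈ 𝒱, ∀ v ∈ 𝒱, Disjoint u v ∨ u ⊆ v ∨ v ⊆ u)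
    (α : ι → ℝ) {u : Finset ι} (hu : u ∈ 𝒱) (hcard : 2 ≤ u.card) :
    ∑ v ∈ 𝒱.filter (fun v => 2 ≤ v.card ∧ v ⊆ u), cumHom 𝒱 A α v =
      ∑ a ∈ u, α a * (if u = A then (1:ℝ) else 1 - ((2:ℝ) ^ treeDepth 𝒱 A u a)⁻¹) := by
  unfold cumHom
  have step1 : ∀ v ∈ 𝒱.filter (fun v => 2 ≤ v.card ∧ v ⊆ u),
      ∑ a ∈ v, α a * ((2:ℝ) ^ treeDepth 𝒱 A v a)⁻¹
        = ∑ a ∈ u, if a ∈ v then α a * ((2:ℝ) ^ treeDepth 𝒱 A v a)⁻¹ else 0 := by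
    intro v hv
    rw [Finset.sum_ite_mem, Finset.inter_eq_right.2 (mem_filter.1 hv).2.2]
  rw [Finset.sum_congr rfl step1, Finset.sum_comm]
  apply Finset.sum_congr rfl
  intro a ha
  rw [← Finset.sum_filter]
  have hfe : (𝒱.filter (fun v => 2 ≤ v.card ∧ v ⊆ u)).filter (fun v => a ∈ v)
      = Cset 𝒱 a u := by
    rw [Finset.filter_filter]
    unfold Cset
    apply Finset.filter_congr
    intro v hv
    tauto
  rw [hfe, ← Finset.mul_sum, key_sum hmem hlam a hu hcard ha]

theorem stmt0 {ι : Type*} [DecidableEq ι] (d : ℕ) (hd : 1 ≤ d)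
    (A : Finset ι) (hA : 2 ≤ A.card)
    (𝒱 : Finset (Finset ι))
    (hmem : ∀ u ∈ 𝒱, u.Nonempty ∧ u ⊆ A)
    (hlam : ∀ u ∈ 𝒱, ∀ v ∈ 𝒱, Disjoint u v ∨ u ⊆ v ∨ v ⊆ u)
    (hroot : A ∈ 𝒱) (hsing : ∀ a ∈ A, {a} ∈ 𝒱)
    (hbin : ∀ u ∈ 𝒱, 2 ≤ u.card →
      ∃ v ∈ 𝒱, ∃ w ∈ 𝒱, Disjoint v w ∧ v ∪ w = u ∧ v ≠ u ∧ w ≠ u)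
    (α : ι → ℝ) (hα : ∀ a ∈ A, 0 < α a ∧ α a ≤ ((d : ℝ) + 2) / 2) :
    (∀ B ⊆ A, ∑ a ∈ B, α a ≤
        ∑ v ∈ 𝒱.filter (fun v => 2 ≤ v.card ∧ (v ∩ B).Nonempty), cumHom 𝒱 A α v) ∧
    (∀ u ∈ 𝒱, 2 ≤ u.card →
        ∑ v ∈ 𝒱.filter (fun v => 2 ≤ v.card ∧ v ⊆ u), cumHom 𝒱 A α v ≤ ∑ a ∈ u, α a) ∧
    (3 ≤ A.card → ∀ u ∈ 𝒱, 2 ≤ u.card → u.card ≤ 3 →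
        ∑ v ∈ 𝒱.filter (fun v => 2 ≤ v.card ∧ v ⊆ u), cumHom 𝒱 A α v
          < ((d : ℝ) + 2) * ((u.card : ℝ) - 1)) := by
  refine ⟨?_, ?_, ?_⟩
  · -- part 1
    intro B hB
    have key1 : ∀ a ∈ B, ∑ v ∈ Cset 𝒱 a A, ((2:ℝ) ^ treeDepth 𝒱 A v a)⁻¹ = 1 := by
      intro a haB
      have h := key_sum hmem hlam a hroot hA (hB haB)
      rwa [if_pos rfl] at h
    have hfilt : ∀ a ∈ B, (𝒱.filter (fun v => 2 ≤ v.card ∧ (v ∩ B).Nonempty)).filter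
        (fun v => a ∈ v) = Cset 𝒱 a A := by
      intro a haB
      rw [Finset.filter_filter]
      unfold Cset
      apply Finset.filter_congr
      intro v hv
      constructor
      · rintro ⟨⟨h1, _⟩, h3⟩; exact ⟨h1, h3, (hmem v hv).2⟩
      · rintro ⟨h1, h2, _⟩; exact ⟨⟨h1, ⟨a, Finset.mem_inter.2 ⟨h2, haB⟩⟩⟩, h2⟩
    calc ∑ a ∈ B, α a
        = ∑ a ∈ B, α a * ∑ v ∈ Cset 𝒱 a A, ((2:ℝ) ^ treeDepth 𝒱 A v a)⁻¹ := by
          refine Finset.sum_congr rfl fun a haB => ?_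
          rw [key1 a haB, mul_one]
      _ = ∑ a ∈ B, ∑ v ∈ 𝒱.filter (fun v => 2 ≤ v.card ∧ (v ∩ B).Nonempty),
            if a ∈ v then α a * ((2:ℝ) ^ treeDepth 𝒱 A v a)⁻¹ else 0 := by
          refine Finset.sum_congr rfl fun a haB => ?_
          rw [Finset.mul_sum, ← hfilt a haB, Finset.sum_filter]
      _ = ∑ v ∈ 𝒱.filter (fun v => 2 ≤ v.card ∧ (v ∩ B).Nonempty), ∑ a ∈ B,
            if a ∈ v then α a * ((2:ℝ) ^ treeDepth 𝒱 A v a)⁻¹ else 0 :=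
          Finset.sum_comm
      _ ≤ ∑ v ∈ 𝒱.filter (fun v => 2 ≤ v.card ∧ (v ∩ B).Nonempty), cumHom 𝒱 A α v := by
          apply Finset.sum_le_sum
          intro v hv
          unfold cumHom
          rw [Finset.sum_ite_mem]
          apply Finset.sum_le_sum_of_subset_of_nonneg Finset.inter_subset_right
          intro a hav _
          have h0 := (hα a ((hmem v (mem_filter.1 hv).1).2 hav)).1
          positivity
  · -- part 2
    intro u hu hcard
    rw [sum_cumHom hmem hlam α hu hcard]
    apply Finset.sum_le_sum
    intro a hau
    have hαa := hα a ((hmem u hu).2 hau)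
    have hS : (if u = A then (1:ℝ) else 1 - ((2:ℝ) ^ treeDepth 𝒱 A u a)⁻¹) ≤ 1 := by
      split
      · exact le_refl 1
      · have h0 : 0 ≤ ((2:ℝ) ^ treeDepth 𝒱 A u a)⁻¹ := by positivity
        linarith
    calc α a * (if u = A then (1:ℝ) else 1 - ((2:ℝ) ^ treeDepth 𝒱 A u a)⁻¹)
        ≤ α a * 1 := mul_le_mul_of_nonneg_left hS hαa.1.le
      _ = α a := mul_one _
  · -- part 3
    intro hA3 u hu h2 h3
    rw [sum_cumHom hmem hlam α hu h2]
    have hdnn : (0:ℝ) ≤ (d:ℝ) := Nat.cast_nonneg d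
    have hc23 : u.card = 2 ∨ u.card = 3 := by omega
    rcases hc23 with hc | hc
    · -- |u| = 2, necessarily u ≠ A
      have huA : u ≠ A := by
        intro h; rw [h] at hc; omega
      simp only [if_neg huA]
      have hlt : ∑ a ∈ u, α a * (1 - ((2:ℝ) ^ treeDepth 𝒱 A u a)⁻¹)
          < ∑ _a ∈ u, ((d:ℝ) + 2) / 2 := by
        apply Finset.sum_lt_sum_of_nonempty (card_pos.1 (by omega))
        intro a hau
        have hαa := hα a ((hmem u hu).2 hau)
        have hpow : 0 < ((2:ℝ) ^ treeDepth 𝒱 A u a)⁻¹ := by positivity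
        calc α a * (1 - ((2:ℝ) ^ treeDepth 𝒱 A u a)⁻¹)
            < α a * 1 := by
              apply mul_lt_mul_of_pos_left _ hαa.1
              linarith
          _ = α a := mul_one _
          _ ≤ ((d:ℝ) + 2) / 2 := hαa.2
      rw [Finset.sum_const, hc] at hlt
      have heq : (2:ℕ) • (((d:ℝ) + 2) / 2) = ((d:ℝ) + 2) * ((u.card : ℝ) - 1) := by
        rw [hc, nsmul_eq_mul]; push_cast; ring
      linarith [heq ▸ hlt]
    · -- |u| = 3
      have hle : ∑ a ∈ u, α a * (if u = A then (1:ℝ) else 1 - ((2:ℝ) ^ treeDepth 𝒱 A u a)⁻¹)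
          ≤ ∑ _a ∈ u, ((d:ℝ) + 2) / 2 := by
        apply Finset.sum_le_sum
        intro a hau
        have hαa := hα a ((hmem u hu).2 hau)
        have hS : (if u = A then (1:ℝ) else 1 - ((2:ℝ) ^ treeDepth 𝒱 A u a)⁻¹) ≤ 1 := by
          split
          · exact le_refl 1
          · have h0 : 0 ≤ ((2:ℝ) ^ treeDepth 𝒱 A u a)⁻¹ := by positivity
            linarith
        exact (mul_le_of_le_one_right hαa.1.le hS).trans hαa.2
      rw [Finset.sum_const, hc] at hle
      have heq : ((3:ℕ) • (((d:ℝ) + 2) / 2)) < ((d:ℝ) + 2) * ((u.card : ℝ) - 1) := by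
        rw [hc, nsmul_eq_mul]; push_cast; linarith
      linarith
end

section
/- Let 𝒱 be a binary coalescence tree over a finite set A with |A| ≥ 2 and let α : A → ℝ. Set m = min_{a∈A} α(a) and M = max_{a∈A} α(a). Then for every u ∈ 𝒱̊ with u ≠ A one has m ≤ c(u) ≤ M, while for the root one has 2m ≤ c(A) ≤ 2M. -/
open Finset

section Aux
variable {ι : Type*} [DecidableEq ι]

/-- "Non-root" depth. -/
def dnr (𝒱 : Finset (Finset ι)) (u : Finset ι) (a : ι) : ℕ :=
  (𝒱.filter fun v => 2 ≤ v.card ∧ a ∈ v ∧ v ⊆ u).card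

/-- "Non-root" cumulant. -/
noncomputable def cnr (𝒱 : Finset (Finset ι)) (α : ι → ℝ) (u : Finset ι) : ℝ :=
  ∑ a ∈ u, α a * ((2 : ℝ) ^ dnr 𝒱 u a)⁻¹

lemma dnr_singleton (𝒱 : Finset (Finset ι)) (a : ι) : dnr 𝒱 {a} a = 0 := by
  unfold dnr
  rw [Finset.card_eq_zero, Finset.filter_eq_empty_iff]
  rintro v hv ⟨h2, _, hsub⟩
  have := Finset.card_le_card hsub
  simp at this
  omega

lemma cnr_singleton (𝒱 : Finset (Finset ι)) (α : ι → ℝ) (a : ι) :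
    cnr 𝒱 α {a} = α a := by
  simp [cnr, dnr_singleton]

lemma dnr_succ (𝒱 : Finset (Finset ι))
    (hlam : ∀ u ∈ 𝒱, ∀ v ∈ 𝒱, Disjoint u v ∨ u ⊆ v ∨ v ⊆ u)
    {u v w : Finset ι} (hu : u ∈ 𝒱) (hv : v ∈ 𝒱) (hw : w ∈ 𝒱)
    (hd : Disjoint v w) (huvw : v ∪ w = u) (hvu : v ≠ u)
    (hcard : 2 ≤ u.card) {a : ι} (ha : a ∈ v) :
    dnr 𝒱 u a = dnr 𝒱 v a + 1 := by
  have hvsub : v ⊆ u := huvw ▸ Finset.subset_union_left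
  unfold dnr
  have hset : 𝒱.filter (fun x => 2 ≤ x.card ∧ a ∈ x ∧ x ⊆ u)
      = insert u (𝒱.filter fun x => 2 ≤ x.card ∧ a ∈ x ∧ x ⊆ v) := by
    ext x
    simp only [Finset.mem_filter, Finset.mem_insert]
    constructor
    · rintro ⟨hx, hx2, hax, hxu⟩
      rcases hlam x hx v hv with h | h | h
      · exact absurd ha (Finset.disjoint_left.mp h hax)
      · exact Or.inr ⟨hx, hx2, hax, h⟩
      · rcases hlam x hx w hw with h' | h' | h'
        · refine Or.inr ⟨hx, hx2, hax, fun b hb => ?_⟩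
          have hbu := hxu hb
          rw [← huvw, Finset.mem_union] at hbu
          rcases hbu with hb' | hb'
          · exact hb'
          · exact absurd hb' (Finset.disjoint_left.mp h' hb)
        · exact absurd (h' hax) (Finset.disjoint_left.mp hd ha)
        · left
          refine Finset.Subset.antisymm hxu ?_
          rw [← huvw]
          exact Finset.union_subset h h'
    · rintro (rfl | ⟨hx, hx2, hax, hxv⟩)
      · exact ⟨hu, hcard, hvsub ha, Finset.Subset.refl _⟩
      · exact ⟨hx, hx2, hax, hxv.trans hvsub⟩
  rw [hset, Finset.card_insert_of_notMem, Nat.add_comm]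
  intro habs
  rw [Finset.mem_filter] at habs
  exact hvu (Finset.Subset.antisymm habs.2.2.2 hvsub).symm

lemma cnr_rec (𝒱 : Finset (Finset ι))
    (hlam : ∀ u ∈ 𝒱, ∀ v ∈ 𝒱, Disjoint u v ∨ u ⊆ v ∨ v ⊆ u)
    {u v w : Finset ι} (hu : u ∈ 𝒱) (hv : v ∈ 𝒱) (hw : w ∈ 𝒱)
    (hd : Disjoint v w) (huvw : v ∪ w = u) (hvu : v ≠ u) (hwu : w ≠ u)
    (hcard : 2 ≤ u.card) (α : ι → ℝ) :
    cnr 𝒱 α u = 2⁻¹ * cnr 𝒱 α v + 2⁻¹ * cnr 𝒱 α w := by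
  unfold cnr
  rw [← huvw, Finset.sum_union hd, Finset.mul_sum, Finset.mul_sum]
  congr 1
  · refine Finset.sum_congr rfl fun a ha => ?_
    rw [huvw, dnr_succ 𝒱 hlam hu hv hw hd huvw hvu hcard ha]
    rw [pow_succ]
    ring
  · refine Finset.sum_congr rfl fun a ha => ?_
    rw [huvw, dnr_succ 𝒱 hlam hu hw hv hd.symm (Finset.union_comm v w ▸ huvw) hwu hcard ha]
    rw [pow_succ]
    ring

lemma main_bound (A : Finset ι) (hAne : A.Nonempty) (𝒱 : Finset (Finset ι))
    (hmem : ∀ u ∈ 𝒱, u.Nonempty ∧ u ⊆ A)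
    (hlam : ∀ u ∈ 𝒱, ∀ v ∈ 𝒱, Disjoint u v ∨ u ⊆ v ∨ v ⊆ u)
    (hbin : ∀ u ∈ 𝒱, 2 ≤ u.card →
      ∃ v ∈ 𝒱, ∃ w ∈ 𝒱, Disjoint v w ∧ v ∪ w = u ∧ v ≠ u ∧ w ≠ u)
    (α : ι → ℝ) :
    ∀ n (u : Finset ι), u ∈ 𝒱 → u.card = n →
      A.inf' hAne α ≤ cnr 𝒱 α u ∧ cnr 𝒱 α u ≤ A.sup' hAne α := by
  intro n
  induction n using Nat.strong_induction_on with
  | _ n ih =>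
    intro u hu hcard
    obtain ⟨hune, husub⟩ := hmem u hu
    rcases Nat.lt_or_ge u.card 2 with h2 | h2
    · have h1 : u.card = 1 := by
        have := Finset.card_pos.mpr hune; omega
      obtain ⟨a, rfl⟩ := Finset.card_eq_one.mp h1
      have haA : a ∈ A := husub (Finset.mem_singleton_self a)
      rw [cnr_singleton]
      exact ⟨Finset.inf'_le α haA, Finset.le_sup' α haA⟩
    · obtain ⟨v, hv, w, hw, hd, huvw, hvu, hwu⟩ := hbin u hu h2
      have hvsub : v ⊆ u := huvw ▸ Finset.subset_union_left
      have hwsub : w ⊆ u := huvw ▸ Finset.subset_union_right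
      have hvc : v.card < n := hcard ▸ Finset.card_lt_card (hvsub.ssubset_of_ne hvu)
      have hwc : w.card < n := hcard ▸ Finset.card_lt_card (hwsub.ssubset_of_ne hwu)
      obtain ⟨hv1, hv2⟩ := ih v.card hvc v hv rfl
      obtain ⟨hw1, hw2⟩ := ih w.card hwc w hw rfl
      rw [cnr_rec 𝒱 hlam hu hv hw hd huvw hvu hwu h2 α]
      constructor
      · nlinarith
      · nlinarith

end Aux

theorem stmt1 {ι : Type*} [DecidableEq ι]
    (A : Finset ι) (hA : 2 ≤ A.card) (hAne : A.Nonempty)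
    (𝒱 : Finset (Finset ι))
    (hmem : ∀ u ∈ 𝒱, u.Nonempty ∧ u ⊆ A)
    (hlam : ∀ u ∈ 𝒱, ∀ v ∈ 𝒱, Disjoint u v ∨ u ⊆ v ∨ v ⊆ u)
    (hroot : A ∈ 𝒱) (hsing : ∀ a ∈ A, {a} ∈ 𝒱)
    (hbin : ∀ u ∈ 𝒱, 2 ≤ u.card →
      ∃ v ∈ 𝒱, ∃ w ∈ 𝒱, Disjoint v w ∧ v ∪ w = u ∧ v ≠ u ∧ w ≠ u)
    (α : ι → ℝ) :
    (∀ u ∈ 𝒱, 2 ≤ u.card → u ≠ A →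
        A.inf' hAne α ≤ cumHom 𝒱 A α u ∧ cumHom 𝒱 A α u ≤ A.sup' hAne α) ∧
    2 * A.inf' hAne α ≤ cumHom 𝒱 A α A ∧ cumHom 𝒱 A α A ≤ 2 * A.sup' hAne α := by
  have key := main_bound A hAne 𝒱 hmem hlam hbin α
  constructor
  · intro u hu hu2 huA
    have heq : cumHom 𝒱 A α u = cnr 𝒱 α u := by
      unfold cumHom cnr treeDepth dnr
      refine Finset.sum_congr rfl fun a _ => ?_
      rw [if_neg huA]
    rw [heq]
    exact key u.card u hu rfl
  · have heq : cumHom 𝒱 A α A = 2 * cnr 𝒱 α A := by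
      unfold cumHom cnr
      rw [Finset.mul_sum]
      refine Finset.sum_congr rfl fun a haA => ?_
      have hfilter : (𝒱.filter fun v => 2 ≤ v.card ∧ a ∈ v)
          = 𝒱.filter fun v => 2 ≤ v.card ∧ a ∈ v ∧ v ⊆ A := by
        refine Finset.filter_congr fun v hv => ?_
        have := (hmem v hv).2
        tauto
      have htd : treeDepth 𝒱 A A a = dnr 𝒱 A a - 1 := by
        unfold treeDepth dnr
        rw [if_pos rfl, hfilter]
      have hpos : 1 ≤ dnr 𝒱 A a := by
        apply Finset.card_pos.mpr
        exact ⟨A, Finset.mem_filter.mpr ⟨hroot, hA, haA, Finset.Subset.refl _⟩⟩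
      rw [htd]
      have : dnr 𝒱 A a = (dnr 𝒱 A a - 1) + 1 := by omega
      rw [this, pow_succ]
      have h2 : ((2:ℝ) ^ (dnr 𝒱 A a - 1)) ≠ 0 := by positivity
      field_simp
      simp
    rw [heq]
    obtain ⟨h1, h2⟩ := key A.card A hroot rfl
    constructor <;> nlinarith
end

section
/- Let p ≥ 2, A = {1,…,p}, let 𝒱 be a binary coalescence tree over A, let 𝐧 : 𝒱̊ → ℤ be a monotone labelling, and let ρ̄ : (0,∞) → [0,∞) be nonincreasing. Let ū ∈ 𝒱 and let n ∈ ℤ be such that n < 𝐧(ū) if ū ∈ 𝒱̊, and 𝐧(u̲) < n where u̲ is the parent of ū if ū ≠ A. Define n_i = n for i ∈ ū and n_i = 𝐧({i} ∧ ū) for i ∉ ū. Then ∏_{i=1}^{p} ρ̄(2^{−n_i}) ≤ ρ̄(2^{−n}) · ∏_{v ∈ 𝒱̊} ρ̄(2^{−𝐧(v)}). -/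
open Finset

/-- interior nodes of the subtree below `u` -/
private def Sf (𝒱 : Finset (Finset ℕ)) (u : Finset ℕ) : Finset (Finset ℕ) :=
  𝒱.filter (fun v => v ⊆ u ∧ 2 ≤ v.card)

private lemma subset_child {𝒱 : Finset (Finset ℕ)}
    (hlam : ∀ u ∈ 𝒱, ∀ v ∈ 𝒱, Disjoint u v ∨ u ⊆ v ∨ v ⊆ u)
    {u a b v : Finset ℕ} (ha : a ∈ 𝒱) (hb : b ∈ 𝒱) (hv : v ∈ 𝒱)
    (hcup : a ∪ b = u) (hvu : v ⊆ u) (hvne : v ≠ u) (hvnon : v.Nonempty) :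
    v ⊆ a ∨ v ⊆ b := by
  have hmem' : ∀ x ∈ v, x ∈ a ∨ x ∈ b := by
    intro x hx
    have h := hvu hx
    rw [← hcup, mem_union] at h
    exact h
  rcases hlam v hv a ha with h1 | h1 | h1
  · rcases hlam v hv b hb with h2 | h2 | h2
    · exfalso
      obtain ⟨x, hx⟩ := hvnon
      rcases hmem' x hx with h | h
      · exact (disjoint_left.mp h1 hx) h
      · exact (disjoint_left.mp h2 hx) h
    · exact Or.inr h2
    · refine Or.inr (fun x hx => ?_)
      rcases hmem' x hx with h | h
      · exact absurd h (disjoint_left.mp h1 hx)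
      · exact h
  · exact Or.inl h1
  · rcases hlam v hv b hb with h2 | h2 | h2
    · refine Or.inl (fun x hx => ?_)
      rcases hmem' x hx with h | h
      · exact h
      · exact absurd h (disjoint_left.mp h2 hx)
    · exact Or.inr h2
    · exfalso
      exact hvne (subset_antisymm hvu (hcup ▸ union_subset h1 h2))

private lemma Sf_split {𝒱 : Finset (Finset ℕ)}
    (hlam : ∀ u ∈ 𝒱, ∀ v ∈ 𝒱, Disjoint u v ∨ u ⊆ v ∨ v ⊆ u)
    {u a b : Finset ℕ} (hu : u ∈ 𝒱) (ha : a ∈ 𝒱) (hb : b ∈ 𝒱)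
    (hcup : a ∪ b = u) (hu2 : 2 ≤ u.card) :
    Sf 𝒱 u = insert u (Sf 𝒱 a ∪ Sf 𝒱 b) := by
  ext v
  simp only [Sf, mem_insert, mem_union, mem_filter]
  constructor
  · rintro ⟨hv, hvu, hv2⟩
    by_cases hveq : v = u
    · exact Or.inl hveq
    · have hvnon : v.Nonempty := card_pos.mp (by omega)
      rcases subset_child hlam ha hb hv hcup hvu hveq hvnon with h | h
      · exact Or.inr (Or.inl ⟨hv, h, hv2⟩)
      · exact Or.inr (Or.inr ⟨hv, h, hv2⟩)
  · rintro (rfl | ⟨hv, hva, hv2⟩ | ⟨hv, hvb, hv2⟩)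
    · exact ⟨hu, subset_rfl, hu2⟩
    · exact ⟨hv, hva.trans (hcup ▸ subset_union_left), hv2⟩
    · exact ⟨hv, hvb.trans (hcup ▸ subset_union_right), hv2⟩

private lemma Sf_notMem {𝒱 : Finset (Finset ℕ)}
    {u a b : Finset ℕ} (hcup : a ∪ b = u) (hau : a ≠ u) (hbu : b ≠ u) :
    u ∉ Sf 𝒱 a ∪ Sf 𝒱 b := by
  simp only [Sf, mem_union, mem_filter, not_or]
  constructor
  · rintro ⟨-, hua, -⟩
    exact hau (subset_antisymm (hcup ▸ subset_union_left) hua)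
  · rintro ⟨-, hub, -⟩
    exact hbu (subset_antisymm (hcup ▸ subset_union_right) hub)

private lemma Sf_disj {𝒱 : Finset (Finset ℕ)}
    {a b : Finset ℕ} (hab : Disjoint a b) :
    Disjoint (Sf 𝒱 a) (Sf 𝒱 b) := by
  rw [disjoint_left]
  intro v hva hvb
  simp only [Sf, mem_filter] at hva hvb
  have hvnon : v.Nonempty := card_pos.mp (by omega)
  obtain ⟨x, hx⟩ := hvnon
  exact (disjoint_left.mp hab (hva.2.1 hx)) (hvb.2.1 hx)

private lemma card_Sf {𝒱 : Finset (Finset ℕ)}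
    (hne : ∀ u ∈ 𝒱, u.Nonempty)
    (hlam : ∀ u ∈ 𝒱, ∀ v ∈ 𝒱, Disjoint u v ∨ u ⊆ v ∨ v ⊆ u)
    (hbin : ∀ u ∈ 𝒱, 2 ≤ u.card →
      ∃ v ∈ 𝒱, ∃ w ∈ 𝒱, Disjoint v w ∧ v ∪ w = u ∧ v ≠ u ∧ w ≠ u) :
    ∀ N : ℕ, ∀ u ∈ 𝒱, u.card ≤ N → (Sf 𝒱 u).card = u.card - 1 := by
  intro N
  induction N with
  | zero =>
    intro u hu hc
    exact absurd (card_pos.mpr (hne u hu)) (by omega)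
  | succ N IH =>
    intro u hu hc
    by_cases hu2 : 2 ≤ u.card
    · obtain ⟨a, ha, b, hb, hab, hcup, hau, hbu⟩ := hbin u hu hu2
      have hcard : a.card + b.card = u.card := by
        rw [← hcup]; exact (card_union_of_disjoint hab).symm
      have haltu : a.card < u.card :=
        card_lt_card (ssubset_of_subset_of_ne (hcup ▸ subset_union_left) hau)
      have hbltu : b.card < u.card :=
        card_lt_card (ssubset_of_subset_of_ne (hcup ▸ subset_union_right) hbu)
      have hanon := card_pos.mpr (hne a ha)
      have hbnon := card_pos.mpr (hne b hb)
      rw [Sf_split hlam hu ha hb hcup hu2,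
        card_insert_of_notMem (Sf_notMem hcup hau hbu),
        card_union_of_disjoint (Sf_disj hab),
        IH a ha (by omega), IH b hb (by omega)]
      omega
    · have : Sf 𝒱 u = ∅ := by
        rw [Sf, filter_eq_empty_iff]
        rintro v hv ⟨hvu, hv2⟩
        exact hu2 (le_trans hv2 (card_le_card hvu))
      rw [this]
      simp only [card_empty]
      omega

private lemma const_pow_le {𝒱 : Finset (Finset ℕ)}
    (hne : ∀ u ∈ 𝒱, u.Nonempty)
    (hlam : ∀ u ∈ 𝒱, ∀ v ∈ 𝒱, Disjoint u v ∨ u ⊆ v ∨ v ⊆ u)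
    (hbin : ∀ u ∈ 𝒱, 2 ≤ u.card →
      ∃ v ∈ 𝒱, ∃ w ∈ 𝒱, Disjoint v w ∧ v ∪ w = u ∧ v ≠ u ∧ w ≠ u)
    (nn : Finset ℕ → ℤ)
    (hmono : ∀ u ∈ 𝒱, ∀ v ∈ 𝒱, 2 ≤ u.card → 2 ≤ v.card → v ⊆ u → nn u ≤ nn v)
    (ρ : ℝ → ℝ) (hρ0 : ∀ r : ℝ, 0 < r → 0 ≤ ρ r)
    (hρmono : ∀ r s : ℝ, 0 < r → r ≤ s → ρ s ≤ ρ r)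
    {u : Finset ℕ} (hu : u ∈ 𝒱) (c : ℤ) (hc : 2 ≤ u.card → c ≤ nn u) :
    ρ ((2 : ℝ) ^ (-c)) ^ u.card
      ≤ ρ ((2 : ℝ) ^ (-c)) * ∏ v ∈ Sf 𝒱 u, ρ ((2 : ℝ) ^ (-(nn v))) := by
  have hcount := card_Sf hne hlam hbin u.card u hu le_rfl
  have hunon := card_pos.mpr (hne u hu)
  have hcard : u.card = (Sf 𝒱 u).card + 1 := by omega
  rw [hcard, pow_succ, mul_comm]
  refine mul_le_mul_of_nonneg_left ?_ (hρ0 _ (zpow_pos two_pos _))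
  rw [← prod_const]
  refine Finset.prod_le_prod (fun v _ => hρ0 _ (zpow_pos two_pos _)) ?_
  intro v hv
  simp only [Sf, mem_filter] at hv
  obtain ⟨hvV, hvu, hv2⟩ := hv
  have hu2 : 2 ≤ u.card := le_trans hv2 (card_le_card hvu)
  have hcv : c ≤ nn v := le_trans (hc hu2) (hmono u hu v hvV hu2 hv2 hvu)
  exact hρmono _ _ (zpow_pos two_pos _)
    (zpow_le_zpow_right₀ one_le_two (by omega))

theorem stmt3 (p : ℕ) (hp : 2 ≤ p)
    (𝒱 : Finset (Finset ℕ))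
    (hmem : ∀ u ∈ 𝒱, u.Nonempty ∧ u ⊆ Finset.Icc 1 p)
    (hlam : ∀ u ∈ 𝒱, ∀ v ∈ 𝒱, Disjoint u v ∨ u ⊆ v ∨ v ⊆ u)
    (hroot : Finset.Icc 1 p ∈ 𝒱) (hsing : ∀ a ∈ Finset.Icc 1 p, {a} ∈ 𝒱)
    (hbin : ∀ u ∈ 𝒱, 2 ≤ u.card →
      ∃ v ∈ 𝒱, ∃ w ∈ 𝒱, Disjoint v w ∧ v ∪ w = u ∧ v ≠ u ∧ w ≠ u)
    -- the monotone labelling `𝐧` on interior nodes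
    (nn : Finset ℕ → ℤ)
    (hmono : ∀ u ∈ 𝒱, ∀ v ∈ 𝒱, 2 ≤ u.card → 2 ≤ v.card → v ⊆ u → nn u ≤ nn v)
    -- `ρ̄ : (0,∞) → [0,∞)` nonincreasing
    (ρ : ℝ → ℝ) (hρ0 : ∀ r : ℝ, 0 < r → 0 ≤ ρ r)
    (hρmono : ∀ r s : ℝ, 0 < r → r ≤ s → ρ s ≤ ρ r)
    -- the distinguished node `ū` and the scale `n`
    (ubar : Finset ℕ) (hubar : ubar ∈ 𝒱) (n : ℤ)
    (hn₁ : 2 ≤ ubar.card → n < nn ubar)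
    -- `𝐧(u̲) < n` for the parent `u̲` of `ū`, i.e. the minimal member of `𝒱`
    -- strictly containing `ū` (this exists whenever `ū ≠ A`)
    (hn₂ : ∀ v ∈ 𝒱, ubar ⊂ v → (∀ w ∈ 𝒱, ubar ⊂ w → v ⊆ w) → nn v < n)
    -- `lca i` is the least common ancestor `{i} ∧ ū` for `i ∉ ū`
    (lca : ℕ → Finset ℕ)
    (hlca : ∀ i ∈ Finset.Icc 1 p, i ∉ ubar →
      lca i ∈ 𝒱 ∧ 2 ≤ (lca i).card ∧ i ∈ lca i ∧ ubar ⊆ lca i ∧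
        ∀ w ∈ 𝒱, i ∈ w → ubar ⊆ w → lca i ⊆ w) :
    ∏ i ∈ Finset.Icc 1 p, ρ ((2 : ℝ) ^ (-(if i ∈ ubar then n else nn (lca i))))
      ≤ ρ ((2 : ℝ) ^ (-n)) *
        ∏ v ∈ 𝒱.filter (fun v => 2 ≤ v.card), ρ ((2 : ℝ) ^ (-(nn v))) := by
  have hne : ∀ u ∈ 𝒱, u.Nonempty := fun u hu => (hmem u hu).1
  have hρpos : ∀ m : ℤ, 0 ≤ ρ ((2 : ℝ) ^ (-m)) :=
    fun m => hρ0 _ (zpow_pos two_pos _)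
  have hubnon : ubar.Nonempty := hne ubar hubar
  -- main induction
  have main : ∀ N : ℕ, ∀ u ∈ 𝒱, u.card ≤ N → ubar ⊆ u →
      ∏ i ∈ u, ρ ((2 : ℝ) ^ (-(if i ∈ ubar then n else nn (lca i))))
        ≤ ρ ((2 : ℝ) ^ (-n)) * ∏ v ∈ Sf 𝒱 u, ρ ((2 : ℝ) ^ (-(nn v))) := by
    intro N
    induction N with
    | zero =>
      intro u hu hc _
      exact absurd (card_pos.mpr (hne u hu)) (by omega)
    | succ N IH =>
      intro u hu hc hsub
      by_cases heq : u = ubar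
      · subst heq
        have hL : ∏ i ∈ u, ρ ((2 : ℝ) ^ (-(if i ∈ u then n else nn (lca i))))
            = ρ ((2 : ℝ) ^ (-n)) ^ u.card := by
          rw [← prod_const]
          exact prod_congr rfl (fun i hi => by rw [if_pos hi])
        rw [hL]
        exact const_pow_le hne hlam hbin nn hmono ρ hρ0 hρmono hu n
          (fun h2 => le_of_lt (hn₁ h2))
      · have hss : ubar ⊂ u := ssubset_of_subset_of_ne hsub (fun h => heq h.symm)
        have hu2 : 2 ≤ u.card := by
          have h1 := card_pos.mpr hubnon
          have h2 := card_lt_card hss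
          omega
        obtain ⟨a, ha, b, hb, hab, hcup, hau, hbu⟩ := hbin u hu hu2
        -- find the child containing ubar
        have key : ∃ c1 ∈ 𝒱, ∃ c2 ∈ 𝒱, Disjoint c1 c2 ∧ c1 ∪ c2 = u ∧
            c1 ≠ u ∧ c2 ≠ u ∧ ubar ⊆ c1 := by
          have hunion : ∀ x ∈ u, x ∈ a ∨ x ∈ b := by
            intro x hx; rw [← hcup, mem_union] at hx; exact hx
          rcases hlam ubar hubar a ha with h | h | h
          · -- disjoint ubar a, so ubar ⊆ b
            refine ⟨b, hb, a, ha, hab.symm, by rw [union_comm]; exact hcup,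
              hbu, hau, fun x hx => ?_⟩
            rcases hunion x (hsub hx) with hxa | hxb
            · exact absurd hxa (disjoint_left.mp h hx)
            · exact hxb
          · exact ⟨a, ha, b, hb, hab, hcup, hau, hbu, h⟩
          · -- a ⊆ ubar
            rcases hlam ubar hubar b hb with h2 | h2 | h2
            · refine ⟨a, ha, b, hb, hab, hcup, hau, hbu, fun x hx => ?_⟩
              rcases hunion x (hsub hx) with hxa | hxb
              · exact hxa
              · exact absurd hxb (disjoint_left.mp h2 hx)
            · exact ⟨b, hb, a, ha, hab.symm, by rw [union_comm]; exact hcup,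
                hbu, hau, h2⟩
            · exfalso
              exact heq (subset_antisymm (hcup ▸ union_subset h h2) hsub)
        obtain ⟨c1, hc1, c2, hc2, hdisj, hcup', hne1, hne2, hsub1⟩ := key
        have hc1u : c1 ⊆ u := hcup' ▸ subset_union_left
        have hc2u : c2 ⊆ u := hcup' ▸ subset_union_right
        have hc1lt : c1.card < u.card :=
          card_lt_card (ssubset_of_subset_of_ne hc1u hne1)
        have hc2nub : ∀ i ∈ c2, i ∉ ubar := by
          intro i hi hiub
          exact (disjoint_left.mp hdisj (hsub1 hiub)) hi
        -- lca i = u for i ∈ c2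
        have hlcaeq : ∀ i ∈ c2, lca i = u := by
          intro i hi
          have hip : i ∈ Finset.Icc 1 p := (hmem u hu).2 (hc2u hi)
          obtain ⟨hlV, hl2, hil, hubl, hlmin⟩ := hlca i hip (hc2nub i hi)
          refine subset_antisymm (hlmin u hu (hc2u hi) hsub) ?_
          have hc2l : c2 ⊆ lca i := by
            rcases hlam (lca i) hlV c2 hc2 with h | h | h
            · exact absurd hil (disjoint_left.mp h.symm hi)
            · exfalso
              obtain ⟨x, hx⟩ := hubnon
              exact (disjoint_left.mp hdisj (hsub1 hx)) (h (hubl hx))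
            · exact h
          have hc1l : c1 ⊆ lca i := by
            rcases hlam (lca i) hlV c1 hc1 with h | h | h
            · obtain ⟨x, hx⟩ := hubnon
              exact absurd (hsub1 hx) (disjoint_left.mp h (hubl hx))
            · exfalso
              exact (disjoint_left.mp hdisj (h hil)) hi
            · exact h
          rw [← hcup']
          exact union_subset hc1l hc2l
        -- split products
        have hLs : ∏ i ∈ u, ρ ((2 : ℝ) ^ (-(if i ∈ ubar then n else nn (lca i))))
            = (∏ i ∈ c1, ρ ((2 : ℝ) ^ (-(if i ∈ ubar then n else nn (lca i)))))
              * ∏ i ∈ c2, ρ ((2 : ℝ) ^ (-(if i ∈ ubar then n else nn (lca i)))) := by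
          rw [← hcup', prod_union hdisj]
        have hc2prod : ∏ i ∈ c2, ρ ((2 : ℝ) ^ (-(if i ∈ ubar then n else nn (lca i))))
            = ρ ((2 : ℝ) ^ (-(nn u))) ^ c2.card := by
          rw [← prod_const]
          refine prod_congr rfl (fun i hi => ?_)
          rw [if_neg (hc2nub i hi), hlcaeq i hi]
        have hRs : ∏ v ∈ Sf 𝒱 u, ρ ((2 : ℝ) ^ (-(nn v)))
            = ρ ((2 : ℝ) ^ (-(nn u))) *
              ((∏ v ∈ Sf 𝒱 c1, ρ ((2 : ℝ) ^ (-(nn v))))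
                * ∏ v ∈ Sf 𝒱 c2, ρ ((2 : ℝ) ^ (-(nn v)))) := by
          rw [Sf_split hlam hu hc1 hc2 hcup' hu2,
            prod_insert (Sf_notMem hcup' hne1 hne2),
            prod_union (Sf_disj hdisj)]
        have h1 : ∏ i ∈ c1, ρ ((2 : ℝ) ^ (-(if i ∈ ubar then n else nn (lca i))))
            ≤ ρ ((2 : ℝ) ^ (-n)) * ∏ v ∈ Sf 𝒱 c1, ρ ((2 : ℝ) ^ (-(nn v))) :=
          IH c1 hc1 (by omega) hsub1
        have h2 : ρ ((2 : ℝ) ^ (-(nn u))) ^ c2.card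
            ≤ ρ ((2 : ℝ) ^ (-(nn u))) * ∏ v ∈ Sf 𝒱 c2, ρ ((2 : ℝ) ^ (-(nn v))) :=
          const_pow_le hne hlam hbin nn hmono ρ hρ0 hρmono hc2 (nn u)
            (fun hcc => hmono u hu c2 hc2 hu2 hcc hc2u)
        rw [hLs, hc2prod, hRs]
        calc (∏ i ∈ c1, ρ ((2 : ℝ) ^ (-(if i ∈ ubar then n else nn (lca i)))))
              * ρ ((2 : ℝ) ^ (-(nn u))) ^ c2.card
            ≤ (ρ ((2 : ℝ) ^ (-n)) * ∏ v ∈ Sf 𝒱 c1, ρ ((2 : ℝ) ^ (-(nn v))))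
              * (ρ ((2 : ℝ) ^ (-(nn u))) * ∏ v ∈ Sf 𝒱 c2, ρ ((2 : ℝ) ^ (-(nn v)))) := by
              refine mul_le_mul h1 h2 (pow_nonneg (hρpos _) _) ?_
              exact mul_nonneg (hρpos _) (Finset.prod_nonneg (fun v _ => hρpos _))
          _ = ρ ((2 : ℝ) ^ (-n)) * (ρ ((2 : ℝ) ^ (-(nn u))) *
              ((∏ v ∈ Sf 𝒱 c1, ρ ((2 : ℝ) ^ (-(nn v))))
                * ∏ v ∈ Sf 𝒱 c2, ρ ((2 : ℝ) ^ (-(nn v))))) := by ring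
  have hfin := main (Finset.Icc 1 p).card (Finset.Icc 1 p) hroot le_rfl
    (hmem ubar hubar).2
  have hSf : Sf 𝒱 (Finset.Icc 1 p) = 𝒱.filter (fun v => 2 ≤ v.card) := by
    rw [Sf]
    refine filter_congr (fun v hv => ?_)
    simp [(hmem v hv).2]
  rwa [hSf] at hfin
end
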